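/- For every graph $G$, the independence number of $G$ is at least $\sum_{v \in V(G)} \frac{1}{1 + d_G(v)}$, where $d_G(v)$ denotes the degree of $v$ in $G$. -/

import Mathlib

/-- An independent set in a simple graph: no two of its vertices are adjacent. -/
def SimpleGraph.IsIndepSet' {V : Type*} (G : SimpleGraph V) (s : Set V) : Prop :=
  ∀ ⦃v⦄, v ∈ s → ∀ ⦃w⦄, w ∈ s → ¬ G.Adj v w

open Finset in
lemma caro_wei_aux {V : Type*} [DecidableEq V] (G : SimpleGraph V) [DecidableRel G.Adj]
    (s : Finset V) :
    ∃ t : Finset V, t ⊆ s ∧ G.IsIndepSet' (t : Set V) ∧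
      (t.card : ℝ) ≥ ∑ v ∈ s, (1 : ℝ) / (1 + ((s.filter (G.Adj v)).card : ℝ)) := by
  classical
  induction s using Finset.strongInduction with
  | _ s ih =>
    rcases s.eq_empty_or_nonempty with rfl | hs
    · exact ⟨∅, by simp, by simp [SimpleGraph.IsIndepSet'], by simp⟩
    · -- pick v of minimum degree within s
      obtain ⟨v, hv, hvmin⟩ := s.exists_min_image (fun u => (s.filter (G.Adj u)).card) hs
      set d : V → ℝ := fun u => (1 : ℝ) / (1 + ((s.filter (G.Adj u)).card : ℝ)) with hd
      set N : Finset V := s.filter (fun u => u = v ∨ G.Adj v u) with hN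
      have hvN : v ∈ N := by simp [hN, hv]
      have hNs : N ⊆ s := filter_subset _ _
      have hNcard : N.card = (s.filter (G.Adj v)).card + 1 := by
        have : N = insert v (s.filter (G.Adj v)) := by
          ext u
          simp only [hN, mem_filter, mem_insert]
          constructor
          · rintro ⟨hu, rfl | h⟩
            · exact Or.inl rfl
            · exact Or.inr ⟨hu, h⟩
          · rintro (rfl | ⟨hu, h⟩)
            · exact ⟨hv, Or.inl rfl⟩
            · exact ⟨hu, Or.inr h⟩
        rw [this, card_insert_of_notMem (by simp [G.irrefl])]
      have hpos : ∀ u : V, (0:ℝ) < 1 + ((s.filter (G.Adj u)).card : ℝ) := by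
        intro u; positivity
      -- sum over N is at most 1
      have hNsum : ∑ u ∈ N, d u ≤ 1 := by
        have h1 : ∀ u ∈ N, d u ≤ 1 / (1 + ((s.filter (G.Adj v)).card : ℝ)) := by
          intro u hu
          apply one_div_le_one_div_of_le (hpos v)
          have := hvmin u (hNs hu)
        
          linarith [(Nat.cast_le (α := ℝ)).mpr this]
        calc ∑ u ∈ N, d u ≤ ∑ _u ∈ N, 1 / (1 + ((s.filter (G.Adj v)).card : ℝ)) :=
              Finset.sum_le_sum h1
          _ = 1 := by
              rw [Finset.sum_const, hNcard]
              rw [nsmul_eq_mul, Nat.cast_add, Nat.cast_one, add_comm ((s.filter (G.Adj v)).card : ℝ) 1,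
                mul_one_div_cancel (hpos v).ne']
      -- recurse on s \ N
      have hssub : s \ N ⊂ s := Finset.sdiff_ssubset hNs ⟨v, hvN⟩
      obtain ⟨t, hts, htind, htcard⟩ := ih (s \ N) hssub
      -- degrees only drop
      have hdrop : ∀ u ∈ s \ N, d u ≤ 1 / (1 + (((s \ N).filter (G.Adj u)).card : ℝ)) := by
        intro u _
        apply one_div_le_one_div_of_le (by positivity)
        have : ((s \ N).filter (G.Adj u)).card ≤ (s.filter (G.Adj u)).card :=
          card_le_card (filter_subset_filter _ (sdiff_subset))
      
        linarith [(Nat.cast_le (α := ℝ)).mpr this]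
      have hsum' : (t.card : ℝ) ≥ ∑ u ∈ s \ N, d u := by
        calc (t.card : ℝ) ≥ ∑ u ∈ s \ N, 1 / (1 + (((s \ N).filter (G.Adj u)).card : ℝ)) := htcard
          _ ≥ ∑ u ∈ s \ N, d u := Finset.sum_le_sum hdrop
      have hsplit : ∑ u ∈ s \ N, d u + ∑ u ∈ N, d u = ∑ u ∈ s, d u :=
        Finset.sum_sdiff hNs
      have hvt : v ∉ t := fun h => (Finset.mem_sdiff.mp (hts h)).2 hvN
      refine ⟨insert v t, ?_, ?_, ?_⟩
      · exact insert_subset hv (hts.trans sdiff_subset)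
      · intro a ha b hb hab
        simp only [coe_insert, Set.mem_insert_iff, mem_coe] at ha hb
        have hnadj : ∀ w ∈ t, ¬ G.Adj v w := by
          intro w hw hadj
          have hws := hts hw
          rw [mem_sdiff] at hws
          exact hws.2 (by simp [hN, hws.1, hadj])
        rcases ha with rfl | ha
        · rcases hb with rfl | hb
          · exact G.irrefl hab
          · exact hnadj b hb hab
        · rcases hb with rfl | hb
          · exact hnadj a ha (G.adj_symm hab)
          · exact htind ha hb hab
      · rw [card_insert_of_notMem hvt]
        push_cast
        linarith

/-- **Caro–Wei theorem.** Every finite graph `G` has an independent set of size at least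
`∑_{v} 1/(1 + d_G(v))`; in particular the independence number of `G` is at least this sum. -/
theorem caro_wei {V : Type*} [Fintype V] (G : SimpleGraph V) [DecidableRel G.Adj] :
    ∃ s : Finset V, G.IsIndepSet' (s : Set V) ∧
      (s.card : ℝ) ≥ ∑ v : V, (1 : ℝ) / (1 + G.degree v) := by
  classical
  obtain ⟨t, _, hind, hcard⟩ := caro_wei_aux G Finset.univ
  refine ⟨t, hind, ?_⟩
  convert hcard using 2 with v
  congr 1
  rw [← SimpleGraph.neighborFinset_eq_filter, SimpleGraph.degree]
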